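/- Let f : [t_{k-1}, t_{k+1}] → ℝ be continuous, positive and increasing, with t_{k-1} < t_k < t_{k+1}, τ_k = t_k - t_{k-1}, τ_{k+1} = t_{k+1} - t_k, ρ_k = τ_k/τ_{k+1}. Define J_j = ∫_{t_{j-1}}^{t_j} ((t - t_{j-1})/τ_j) f(t) dt for j = k, k+1. Then J_{k+1} ≥ (1/ρ_k) J_k. -/

import Mathlib

open intervalIntegral

theorem stmt_11 (tkm1 tk tkp1 : ℝ) (h1 : tkm1 < tk) (h2 : tk < tkp1) (f : ℝ → ℝ)
    (hcont : ContinuousOn f (Set.Icc tkm1 tkp1))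
    (hpos : ∀ t ∈ Set.Icc tkm1 tkp1, 0 < f t)
    (hmono : MonotoneOn f (Set.Icc tkm1 tkp1)) :
    (∫ t in tk..tkp1, ((t - tk) / (tkp1 - tk)) * f t)
      ≥ (1 / ((tk - tkm1) / (tkp1 - tk))) *
          ∫ t in tkm1..tk, ((t - tkm1) / (tk - tkm1)) * f t := by
  have hτ1 : (0:ℝ) < tk - tkm1 := sub_pos.mpr h1
  have hτ2 : (0:ℝ) < tkp1 - tk := sub_pos.mpr h2
  -- substitution for the first integral
  have key1 : ∫ z in (0:ℝ)..1, z * f ((tk - tkm1) * z + tkm1)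
      = (tk - tkm1)⁻¹ * ∫ t in tkm1..tk, ((t - tkm1) / (tk - tkm1)) * f t := by
    have h := intervalIntegral.integral_comp_mul_add (a := (0:ℝ)) (b := 1)
      (fun t => ((t - tkm1) / (tk - tkm1)) * f t) (ne_of_gt hτ1) tkm1
    simp only [mul_zero, zero_add, mul_one, smul_eq_mul] at h
    rw [show tk - tkm1 + tkm1 = tk by ring] at h
    rw [← h]
    apply intervalIntegral.integral_congr
    intro z _
    simp only
    field_simp
    ring
  have key2 : ∫ z in (0:ℝ)..1, z * f ((tkp1 - tk) * z + tk)
      = (tkp1 - tk)⁻¹ * ∫ t in tk..tkp1, ((t - tk) / (tkp1 - tk)) * f t := by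
    have h := intervalIntegral.integral_comp_mul_add (a := (0:ℝ)) (b := 1)
      (fun t => ((t - tk) / (tkp1 - tk)) * f t) (ne_of_gt hτ2) tk
    simp only [mul_zero, zero_add, mul_one, smul_eq_mul] at h
    rw [show tkp1 - tk + tk = tkp1 by ring] at h
    rw [← h]
    apply intervalIntegral.integral_congr
    intro z _
    simp only
    field_simp
    ring
  -- membership lemmas
  have mem1 : ∀ z ∈ Set.Icc (0:ℝ) 1, (tk - tkm1) * z + tkm1 ∈ Set.Icc tkm1 tkp1 := by
    intro z hz
    constructor
    · nlinarith [hz.1, hz.2]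
    · nlinarith [hz.1, hz.2]
  have mem2 : ∀ z ∈ Set.Icc (0:ℝ) 1, (tkp1 - tk) * z + tk ∈ Set.Icc tkm1 tkp1 := by
    intro z hz
    constructor
    · nlinarith [hz.1, hz.2]
    · nlinarith [hz.1, hz.2]
  -- integrability
  have hi1 : IntervalIntegrable (fun z => z * f ((tk - tkm1) * z + tkm1))
      MeasureTheory.volume 0 1 := by
    apply ContinuousOn.intervalIntegrable
    rw [Set.uIcc_of_le (by norm_num : (0:ℝ) ≤ 1)]
    exact continuousOn_id.mul
      (hcont.comp (Continuous.continuousOn (by continuity)) mem1)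
  have hi2 : IntervalIntegrable (fun z => z * f ((tkp1 - tk) * z + tk))
      MeasureTheory.volume 0 1 := by
    apply ContinuousOn.intervalIntegrable
    rw [Set.uIcc_of_le (by norm_num : (0:ℝ) ≤ 1)]
    exact continuousOn_id.mul
      (hcont.comp (Continuous.continuousOn (by continuity)) mem2)
  -- pointwise comparison
  have hmon : (∫ z in (0:ℝ)..1, z * f ((tk - tkm1) * z + tkm1))
      ≤ ∫ z in (0:ℝ)..1, z * f ((tkp1 - tk) * z + tk) := by
    apply intervalIntegral.integral_mono_on (by norm_num) hi1 hi2
    intro z hz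
    have hle : (tk - tkm1) * z + tkm1 ≤ (tkp1 - tk) * z + tk := by
      nlinarith [hz.1, hz.2]
    have := hmono (mem1 z hz) (mem2 z hz) hle
    exact mul_le_mul_of_nonneg_left this hz.1
  -- put it together
  have e1 : (∫ t in tkm1..tk, ((t - tkm1) / (tk - tkm1)) * f t)
      = (tk - tkm1) * ∫ z in (0:ℝ)..1, z * f ((tk - tkm1) * z + tkm1) := by
    rw [key1]; field_simp
  have e2 : (∫ t in tk..tkp1, ((t - tk) / (tkp1 - tk)) * f t)
      = (tkp1 - tk) * ∫ z in (0:ℝ)..1, z * f ((tkp1 - tk) * z + tk) := by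
    rw [key2]; field_simp
  rw [ge_iff_le, e1, e2, one_div]
  have heq : ((tk - tkm1) / (tkp1 - tk))⁻¹ * ((tk - tkm1) *
      ∫ z in (0:ℝ)..1, z * f ((tk - tkm1) * z + tkm1))
      = (tkp1 - tk) * ∫ z in (0:ℝ)..1, z * f ((tk - tkm1) * z + tkm1) := by
    rw [inv_div]
    field_simp
  rw [heq]
  exact mul_le_mul_of_nonneg_left hmon (le_of_lt hτ2)
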